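/- Uniform-norm control of the Nikaido–Isoda error (Lemma C.1): Let f be continuous on 𝕋^n × 𝕋^n, and let μ_i = ρ_i dx and ν_i = η_i dx (i = 1, 2) be probability measures on 𝕋^n whose densities satisfy C₁^{−1} ≤ ρ_1, ρ_2, η_1, η_2 ≤ C₁ everywhere, for some constant C₁ ∈ [1, ∞). Then there exists a constant C, depending only on C₁ and on sup|f|, such that |NI(μ_1,ν_1) − NI(μ_2,ν_2)| ≤ C ( sup_{𝕋^n}|ρ_1 − ρ_2| + sup_{𝕋^n}|η_1 − η_2| ). -/

import Mathlib

open MeasureTheory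

attribute [local instance] ZeroLEOneClass.factZeroLtOne

/-- The flat torus `ℝⁿ/ℤⁿ`, modeled as a product of circles of length `1`, equipped with
its (probability) Haar/Lebesgue measure `volume`. -/
abbrev Torus (n : ℕ) := Fin n → AddCircle (1 : ℝ)

/-- The density of a measure on the torus with respect to the Lebesgue (probability) measure. -/
noncomputable def density {n : ℕ} (ν : Measure (Torus n)) : Torus n → ℝ :=
  fun x => (ν.rnDeriv volume x).toReal

/-- A measure has finite entropy `H(ν) = ∫ ρ log ρ dx < ∞` iff it is absolutely continuous with
respect to Lebesgue measure and `ρ log ρ` is integrable. -/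
def entAdmissible {n : ℕ} (ν : Measure (Torus n)) : Prop :=
  ν ≪ (volume : Measure (Torus n)) ∧
    Integrable (fun x => density ν x * Real.log (density ν x)) (volume : Measure (Torus n))

/-- The (negative) entropy `H(ν) = ∫ ρ log ρ dx` of an absolutely continuous measure. -/
noncomputable def Hent {n : ℕ} (ν : Measure (Torus n)) : ℝ :=
  ∫ x, density ν x * Real.log (density ν x)

open Classical in
/-- The payoff functional `F(μ,ν) = ∬ f dμ dν + H(μ) − H(ν)`, as an extended real number:
it equals `−∞ = ⊥` when `H(ν) = +∞` (and `H(μ) < ∞`), and `+∞ = ⊤` when `H(μ) = +∞`. -/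
noncomputable def Fval {n : ℕ} (f : Torus n → Torus n → ℝ) (μ ν : Measure (Torus n)) : EReal :=
  if entAdmissible μ then
    (if entAdmissible ν then (((∫ x, ∫ y, f x y ∂ν ∂μ) + Hent μ - Hent ν : ℝ) : EReal) else ⊥)
  else ⊤

/-- The Nikaido–Isoda error `NI(μ,ν) = sup_{ν'} F(μ,ν') − inf_{μ'} F(μ',ν)`, the suprema and
infima being taken over all Borel probability measures on the torus. -/
noncomputable def NIval {n : ℕ} (f : Torus n → Torus n → ℝ) (μ ν : Measure (Torus n)) : EReal :=
  (⨆ ν' ∈ {m : Measure (Torus n) | IsProbabilityMeasure m}, Fval f μ ν')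
    - (⨅ μ' ∈ {m : Measure (Torus n) | IsProbabilityMeasure m}, Fval f μ' ν)

instance : IsProbabilityMeasure (volume : Measure (AddCircle (1:ℝ))) :=
  ⟨by rw [AddCircle.measure_univ]; simp⟩

instance (n : ℕ) : IsProbabilityMeasure (volume : Measure (Torus n)) := by
  rw [show (volume : Measure (Torus n)) = Measure.pi (fun _ => volume) from rfl]
  infer_instance

section
variable {n : ℕ} {C₁ B : ℝ}

-- basic pointwise facts
lemma abs_log_le (hC : 1 ≤ C₁) {t : ℝ} (h1 : C₁⁻¹ ≤ t) (h2 : t ≤ C₁) :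
    |Real.log t| ≤ Real.log C₁ := by
  have hC0 : (0:ℝ) < C₁ := lt_of_lt_of_le one_pos hC
  have ht0 : 0 < t := lt_of_lt_of_le (inv_pos.mpr hC0) h1
  rw [abs_le]
  constructor
  · rw [← Real.log_inv]
    exact Real.log_le_log (inv_pos.mpr hC0) h1
  · exact Real.log_le_log ht0 h2

lemma mul_log_lip (hC : 1 ≤ C₁) {a b : ℝ} (ha : a ∈ Set.Icc C₁⁻¹ C₁) (hb : b ∈ Set.Icc C₁⁻¹ C₁) :
    |a * Real.log a - b * Real.log b| ≤ (1 + Real.log C₁) * |a - b| := by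
  have hC0 : (0:ℝ) < C₁ := lt_of_lt_of_le one_pos hC
  have := Convex.norm_image_sub_le_of_norm_hasDerivWithin_le
    (f := fun t : ℝ => t * Real.log t) (f' := fun t => Real.log t + 1)
    (s := Set.Icc C₁⁻¹ C₁) (C := 1 + Real.log C₁)
    (fun x hx => (Real.hasDerivAt_mul_log
      (ne_of_gt (lt_of_lt_of_le (inv_pos.mpr hC0) hx.1))).hasDerivWithinAt)
    (fun x hx => by
      rw [Real.norm_eq_abs]
      calc |Real.log x + 1| ≤ |Real.log x| + 1 := by
              simpa [add_comm] using abs_add_le (Real.log x) 1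
        _ ≤ Real.log C₁ + 1 := by linarith [abs_log_le hC hx.1 hx.2]
        _ = 1 + Real.log C₁ := by ring)
    (convex_Icc _ _) hb ha
  simpa [Real.norm_eq_abs] using this

lemma sub_one_le_mul_log {t : ℝ} (ht : 0 ≤ t) : t - 1 ≤ t * Real.log t := by
  rcases eq_or_lt_of_le ht with h | h
  · simp [← h]
  · have h1 := Real.log_le_sub_one_of_pos (inv_pos.mpr h)
    rw [Real.log_inv] at h1
    have h2 : t * t⁻¹ = 1 := mul_inv_cancel₀ (ne_of_gt h)
    nlinarith

-- abbreviation for the measures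
noncomputable def mk' (ρ : Torus n → ℝ) : Measure (Torus n) :=
  volume.withDensity fun x => ENNReal.ofReal (ρ x)

lemma density_mk {ρ : Torus n → ℝ} (hm : Measurable ρ) (h0 : ∀ x, 0 ≤ ρ x) :
    density (mk' ρ) =ᵐ[(volume : Measure (Torus n))] ρ := by
  filter_upwards [Measure.rnDeriv_withDensity (volume : Measure (Torus n)) hm.ennreal_ofReal]
    with x hx
  simp only [density, mk', hx, ENNReal.toReal_ofReal (h0 x)]

lemma Hent_mk {ρ : Torus n → ℝ} (hm : Measurable ρ) (h0 : ∀ x, 0 ≤ ρ x) :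
    Hent (mk' ρ) = ∫ x, ρ x * Real.log (ρ x) := by
  refine integral_congr_ae ?_
  filter_upwards [density_mk hm h0] with x hx
  rw [hx]

lemma integrable_of_bounded {μ : Measure (Torus n)} [IsFiniteMeasure μ] {g : Torus n → ℝ} {M : ℝ}
    (hg : AEStronglyMeasurable g μ) (h : ∀ x, |g x| ≤ M) : Integrable g μ :=
  Integrable.mono' (integrable_const M) hg (Filter.Eventually.of_forall fun x => by
    simpa [Real.norm_eq_abs] using h x)

lemma entAdmissible_mk (hC : 1 ≤ C₁) {ρ : Torus n → ℝ} (hm : Measurable ρ)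
    (hlo : ∀ x, C₁⁻¹ ≤ ρ x) (hhi : ∀ x, ρ x ≤ C₁) : entAdmissible (mk' ρ) := by
  have hC0 : (0:ℝ) < C₁ := lt_of_lt_of_le one_pos hC
  have h0 : ∀ x, 0 ≤ ρ x := fun x => le_trans (le_of_lt (inv_pos.mpr hC0)) (hlo x)
  refine ⟨withDensity_absolutelyContinuous _ _, ?_⟩
  have hint : Integrable (fun x => ρ x * Real.log (ρ x)) (volume : Measure (Torus n)) := by
    refine integrable_of_bounded (g := fun x => ρ x * Real.log (ρ x)) (M := C₁ * Real.log C₁)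
      ((hm.mul (Real.measurable_log.comp hm)).aestronglyMeasurable) fun x => ?_
    rw [abs_mul]
    exact mul_le_mul (by rw [abs_of_nonneg (h0 x)]; exact hhi x)
      (abs_log_le hC (hlo x) (hhi x)) (abs_nonneg _) (le_of_lt hC0)
  refine hint.congr ?_
  filter_upwards [density_mk hm h0] with x hx
  rw [hx]

lemma entAdmissible_volume : entAdmissible (volume : Measure (Torus n)) := by
  refine ⟨Measure.AbsolutelyContinuous.refl _, ?_⟩
  have : (fun x : Torus n => density (volume : Measure (Torus n)) x *
      Real.log (density (volume : Measure (Torus n)) x)) =ᵐ[(volume : Measure (Torus n))]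
      (fun _ => 0) := by
    filter_upwards [Measure.rnDeriv_self (volume : Measure (Torus n))] with x hx
    simp [density, hx]
  exact (integrable_congr this).mpr (integrable_zero _ _ _)

lemma Hent_volume : Hent (volume : Measure (Torus n)) = 0 := by
  rw [Hent]
  have : (fun x : Torus n => density (volume : Measure (Torus n)) x *
      Real.log (density (volume : Measure (Torus n)) x)) =ᵐ[(volume : Measure (Torus n))]
      (fun _ => 0) := by
    filter_upwards [Measure.rnDeriv_self (volume : Measure (Torus n))] with x hx
    simp [density, hx]
  rw [integral_congr_ae this, integral_zero]

lemma Hent_nonneg {ν : Measure (Torus n)} [IsProbabilityMeasure ν] (h : entAdmissible ν) :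
    0 ≤ Hent ν := by
  have hint1 : Integrable (density ν) (volume : Measure (Torus n)) :=
    Measure.integrable_toReal_rnDeriv
  have h1 : ∫ x, density ν x ∂(volume : Measure (Torus n)) = 1 := by
    simp only [density]
    have := Measure.integral_toReal_rnDeriv h.1
    simpa using this
  have hpt : ∀ x, density ν x - 1 ≤ density ν x * Real.log (density ν x) := fun x =>
    sub_one_le_mul_log ENNReal.toReal_nonneg
  calc (0:ℝ) = ∫ x, (density ν x - 1) ∂(volume : Measure (Torus n)) := by
        rw [integral_sub hint1 (integrable_const 1), h1]; simp
    _ ≤ Hent ν := integral_mono (hint1.sub (integrable_const 1)) h.2 hpt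

lemma abs_integral_le {μ : Measure (Torus n)} [IsProbabilityMeasure μ] {g : Torus n → ℝ} {M : ℝ}
    (h : ∀ x, |g x| ≤ M) : |∫ x, g x ∂μ| ≤ M := by
  have := norm_integral_le_of_norm_le_const (μ := μ) (f := g) (C := M)
    (Filter.Eventually.of_forall fun x => by simpa [Real.norm_eq_abs] using h x)
  simpa [Real.norm_eq_abs] using this

lemma integral_mk {ρ : Torus n → ℝ} (hm : Measurable ρ) (h0 : ∀ x, 0 ≤ ρ x) (g : Torus n → ℝ) :
    ∫ x, g x ∂(mk' ρ) = ∫ x, ρ x * g x := by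
  have h1 : mk' ρ = volume.withDensity fun x => (((ρ x).toNNReal : NNReal) : ENNReal) := rfl
  rw [h1, integral_withDensity_eq_integral_smul hm.real_toNNReal g]
  refine integral_congr_ae (Filter.Eventually.of_forall fun x => ?_)
  show (ρ x).toNNReal • g x = ρ x * g x
  rw [NNReal.smul_def, smul_eq_mul, Real.coe_toNNReal _ (h0 x)]

noncomputable def Fre (f : Torus n → Torus n → ℝ) (μ ν : Measure (Torus n)) : ℝ :=
  (∫ x, ∫ y, f x y ∂ν ∂μ) + Hent μ - Hent ν

lemma Fval_eq {f : Torus n → Torus n → ℝ} {μ ν : Measure (Torus n)}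
    (hμ : entAdmissible μ) (hν : entAdmissible ν) :
    Fval f μ ν = ((Fre f μ ν : ℝ) : EReal) := by
  rw [Fval, if_pos hμ, if_pos hν]; rfl

lemma Fval_bot {f : Torus n → Torus n → ℝ} {μ ν : Measure (Torus n)}
    (hμ : entAdmissible μ) (hν : ¬ entAdmissible ν) : Fval f μ ν = ⊥ := by
  rw [Fval, if_pos hμ, if_neg hν]

lemma Fval_top {f : Torus n → Torus n → ℝ} {μ ν : Measure (Torus n)}
    (hμ : ¬ entAdmissible μ) : Fval f μ ν = ⊤ := by
  rw [Fval, if_neg hμ]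

lemma cont_inner {f : Torus n → Torus n → ℝ}
    (hf : Continuous fun p : Torus n × Torus n => f p.1 p.2)
    (hB : ∀ x y, |f x y| ≤ B) (ν : Measure (Torus n)) [IsFiniteMeasure ν] :
    Continuous fun x => ∫ y, f x y ∂ν := by
  apply continuous_of_dominated (bound := fun _ => B)
  · exact fun x => (hf.comp (Continuous.prodMk_right x)).aestronglyMeasurable
  · exact fun x => Filter.Eventually.of_forall fun y => by
      simpa [Real.norm_eq_abs] using hB x y
  · exact integrable_const B
  · exact Filter.Eventually.of_forall fun y =>
      hf.comp (continuous_id.prodMk continuous_const)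

lemma abs_inner_le {f : Torus n → Torus n → ℝ} (hB : ∀ x y, |f x y| ≤ B)
    (ν : Measure (Torus n)) [IsProbabilityMeasure ν] (x : Torus n) :
    |∫ y, f x y ∂ν| ≤ B := abs_integral_le fun y => hB x y

lemma abs_double_le {f : Torus n → Torus n → ℝ} (hB : ∀ x y, |f x y| ≤ B)
    (μ ν : Measure (Torus n)) [IsProbabilityMeasure μ] [IsProbabilityMeasure ν] :
    |∫ x, ∫ y, f x y ∂ν ∂μ| ≤ B := abs_integral_le fun x => abs_inner_le hB ν x

variable {f : Torus n → Torus n → ℝ}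

lemma Smem : (volume : Measure (Torus n)) ∈ {m : Measure (Torus n) | IsProbabilityMeasure m} :=
  inferInstanceAs (IsProbabilityMeasure _)

lemma sup_finite (hB : ∀ x y, |f x y| ≤ B) (hC : 1 ≤ C₁) {ρ : Torus n → ℝ} (hm : Measurable ρ)
    (hlo : ∀ x, C₁⁻¹ ≤ ρ x) (hhi : ∀ x, ρ x ≤ C₁) (hprob : IsProbabilityMeasure (mk' ρ)) :
    ∃ s : ℝ, (⨆ ν' ∈ {m : Measure (Torus n) | IsProbabilityMeasure m}, Fval f (mk' ρ) ν')
      = (s : EReal) := by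
  have hadm : entAdmissible (mk' ρ) := entAdmissible_mk hC hm hlo hhi
  set S := ⨆ ν' ∈ {m : Measure (Torus n) | IsProbabilityMeasure m}, Fval f (mk' ρ) ν' with hSdef
  have hub : S ≤ ((B + Hent (mk' ρ) : ℝ) : EReal) := by
    refine iSup₂_le fun ν' hν' => ?_
    haveI : IsProbabilityMeasure ν' := hν'
    by_cases ha : entAdmissible ν'
    · rw [Fval_eq hadm ha]
      refine EReal.coe_le_coe_iff.mpr ?_
      have h1 : ∫ x, ∫ y, f x y ∂ν' ∂(mk' ρ) ≤ B := le_of_abs_le (abs_double_le hB _ ν')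
      have h2 : 0 ≤ Hent ν' := Hent_nonneg ha
      rw [Fre]; linarith
    · rw [Fval_bot hadm ha]; exact bot_le
  have hlb : ((Fre f (mk' ρ) volume : ℝ) : EReal) ≤ S := by
    have h := le_iSup₂ (f := fun ν' (_ : ν' ∈ {m : Measure (Torus n) | IsProbabilityMeasure m})
      => Fval f (mk' ρ) ν') volume Smem
    rw [Fval_eq hadm entAdmissible_volume] at h
    exact h
  have hne_bot : S ≠ ⊥ := fun hb => by
    rw [hb, le_bot_iff] at hlb; exact EReal.coe_ne_bot _ hlb
  have hne_top : S ≠ ⊤ := fun ht => by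
    rw [ht, top_le_iff] at hub; exact EReal.coe_ne_top _ hub
  exact ⟨S.toReal, (EReal.coe_toReal hne_top hne_bot).symm⟩

lemma inf_finite (hB : ∀ x y, |f x y| ≤ B) (hC : 1 ≤ C₁) {η : Torus n → ℝ} (hm : Measurable η)
    (hlo : ∀ x, C₁⁻¹ ≤ η x) (hhi : ∀ x, η x ≤ C₁) (hprob : IsProbabilityMeasure (mk' η)) :
    ∃ s : ℝ, (⨅ μ' ∈ {m : Measure (Torus n) | IsProbabilityMeasure m}, Fval f μ' (mk' η))
      = (s : EReal) := by
  have hadm : entAdmissible (mk' η) := entAdmissible_mk hC hm hlo hhi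
  set S := ⨅ μ' ∈ {m : Measure (Torus n) | IsProbabilityMeasure m}, Fval f μ' (mk' η) with hSdef
  have hlb : ((-B - Hent (mk' η) : ℝ) : EReal) ≤ S := by
    refine le_iInf₂ fun μ' hμ' => ?_
    haveI : IsProbabilityMeasure μ' := hμ'
    by_cases ha : entAdmissible μ'
    · rw [Fval_eq ha hadm]
      refine EReal.coe_le_coe_iff.mpr ?_
      have h1 : -B ≤ ∫ x, ∫ y, f x y ∂(mk' η) ∂μ' := neg_le_of_abs_le (abs_double_le hB μ' _)
      have h2 : 0 ≤ Hent μ' := Hent_nonneg ha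
      rw [Fre]; linarith
    · rw [Fval_top ha]; exact le_top
  have hub : S ≤ ((Fre f volume (mk' η) : ℝ) : EReal) := by
    have h := iInf₂_le (f := fun μ' (_ : μ' ∈ {m : Measure (Torus n) | IsProbabilityMeasure m})
      => Fval f μ' (mk' η)) volume Smem
    rw [Fval_eq entAdmissible_volume hadm] at h
    exact h
  have hne_bot : S ≠ ⊥ := fun hb => by
    rw [hb, le_bot_iff] at hlb; exact EReal.coe_ne_bot _ hlb
  have hne_top : S ≠ ⊤ := fun ht => by
    rw [ht, top_le_iff] at hub; exact EReal.coe_ne_top _ hub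
  exact ⟨S.toReal, (EReal.coe_toReal hne_top hne_bot).symm⟩

lemma sup_le_aux {μ₁ μ₂ : Measure (Torus n)} (h1 : entAdmissible μ₁) (h2 : entAdmissible μ₂)
    {ε s₁ s₂ : ℝ}
    (hε : ∀ ν' : Measure (Torus n), IsProbabilityMeasure ν' → entAdmissible ν' →
      Fre f μ₁ ν' ≤ Fre f μ₂ ν' + ε)
    (hS1 : (⨆ ν' ∈ {m : Measure (Torus n) | IsProbabilityMeasure m}, Fval f μ₁ ν') = (s₁ : EReal))
    (hS2 : (⨆ ν' ∈ {m : Measure (Torus n) | IsProbabilityMeasure m}, Fval f μ₂ ν') = (s₂ : EReal)) :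
    s₁ ≤ s₂ + ε := by
  rw [← EReal.coe_le_coe_iff, ← hS1]
  refine iSup₂_le fun ν' hν' => ?_
  haveI : IsProbabilityMeasure ν' := hν'
  by_cases ha : entAdmissible ν'
  · rw [Fval_eq h1 ha]
    refine EReal.coe_le_coe_iff.mpr ?_
    have hb : Fre f μ₂ ν' ≤ s₂ := by
      have h := le_iSup₂ (f := fun ν'' (_ : ν'' ∈ {m : Measure (Torus n) | IsProbabilityMeasure m})
        => Fval f μ₂ ν'') ν' hν'
      rw [hS2, Fval_eq h2 ha] at h
      exact EReal.coe_le_coe_iff.mp h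
    linarith [hε ν' ‹_› ha]
  · rw [Fval_bot h1 ha]; exact bot_le

lemma inf_le_aux {ν₁ ν₂ : Measure (Torus n)} (h1 : entAdmissible ν₁) (h2 : entAdmissible ν₂)
    {ε i₁ i₂ : ℝ}
    (hε : ∀ μ' : Measure (Torus n), IsProbabilityMeasure μ' → entAdmissible μ' →
      Fre f μ' ν₁ ≤ Fre f μ' ν₂ + ε)
    (hS1 : (⨅ μ' ∈ {m : Measure (Torus n) | IsProbabilityMeasure m}, Fval f μ' ν₁) = (i₁ : EReal))
    (hS2 : (⨅ μ' ∈ {m : Measure (Torus n) | IsProbabilityMeasure m}, Fval f μ' ν₂) = (i₂ : EReal)) :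
    i₁ ≤ i₂ + ε := by
  rw [← sub_le_iff_le_add, ← EReal.coe_le_coe_iff, ← hS2]
  refine le_iInf₂ fun μ' hμ' => ?_
  haveI : IsProbabilityMeasure μ' := hμ'
  by_cases ha : entAdmissible μ'
  · rw [Fval_eq ha h2]
    refine EReal.coe_le_coe_iff.mpr ?_
    have hb : i₁ ≤ Fre f μ' ν₁ := by
      have h := iInf₂_le (f := fun μ'' (_ : μ'' ∈ {m : Measure (Torus n) | IsProbabilityMeasure m})
        => Fval f μ'' ν₁) μ' hμ'
      rw [hS1, Fval_eq ha h1] at h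
      exact EReal.coe_le_coe_iff.mp h
    linarith [hε μ' ‹_› ha]
  · rw [Fval_top ha]; exact le_top

lemma le_ciSup_of_bdd {u : Torus n → ℝ} {M : ℝ} (hb : ∀ x, u x ≤ M) (x : Torus n) :
    u x ≤ ⨆ x, u x :=
  le_ciSup ⟨M, fun _ ⟨y, hy⟩ => hy ▸ hb y⟩ x

lemma Fre_sup_diff (hf : Continuous fun p : Torus n × Torus n => f p.1 p.2)
    (hB : ∀ x y, |f x y| ≤ B) (hC : 1 ≤ C₁) {ρ₁ ρ₂ : Torus n → ℝ}
    (hm1 : Measurable ρ₁) (hm2 : Measurable ρ₂)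
    (hlo1 : ∀ x, C₁⁻¹ ≤ ρ₁ x) (hhi1 : ∀ x, ρ₁ x ≤ C₁)
    (hlo2 : ∀ x, C₁⁻¹ ≤ ρ₂ x) (hhi2 : ∀ x, ρ₂ x ≤ C₁)
    (ν' : Measure (Torus n)) [IsProbabilityMeasure ν'] :
    |Fre f (mk' ρ₁) ν' - Fre f (mk' ρ₂) ν'|
      ≤ (B + (1 + Real.log C₁)) * (⨆ x, |ρ₁ x - ρ₂ x|) := by
  have hC0 : (0:ℝ) < C₁ := lt_of_lt_of_le one_pos hC
  have h01 : ∀ x, 0 ≤ ρ₁ x := fun x => le_trans (le_of_lt (inv_pos.mpr hC0)) (hlo1 x)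
  have h02 : ∀ x, 0 ≤ ρ₂ x := fun x => le_trans (le_of_lt (inv_pos.mpr hC0)) (hlo2 x)
  have hBnn : 0 ≤ B := le_trans (abs_nonneg _)
    (hB (Classical.arbitrary _) (Classical.arbitrary _))
  have hLnn : 0 ≤ 1 + Real.log C₁ := by
    have := Real.log_nonneg hC; linarith
  set d := ⨆ x, |ρ₁ x - ρ₂ x| with hd_def
  have hbd : ∀ x, |ρ₁ x - ρ₂ x| ≤ C₁ + C₁ := fun x => by
    calc |ρ₁ x - ρ₂ x| ≤ |ρ₁ x| + |ρ₂ x| := abs_sub _ _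
      _ ≤ C₁ + C₁ := add_le_add (by rw [abs_of_nonneg (h01 x)]; exact hhi1 x)
          (by rw [abs_of_nonneg (h02 x)]; exact hhi2 x)
  have hd : ∀ x, |ρ₁ x - ρ₂ x| ≤ d := fun x => le_ciSup_of_bdd hbd x
  have hd0 : 0 ≤ d := le_trans (abs_nonneg _) (hd (Classical.arbitrary _))
  set g := fun x => ∫ y, f x y ∂ν' with hg_def
  have hg : Continuous g := cont_inner hf hB ν'
  have hgB : ∀ x, |g x| ≤ B := fun x => abs_inner_le hB ν' x
  -- rewrite the two Fre values
  have e1 : Fre f (mk' ρ₁) ν' = (∫ x, ρ₁ x * g x) + (∫ x, ρ₁ x * Real.log (ρ₁ x)) - Hent ν' := by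
    rw [Fre, integral_mk hm1 h01 g, Hent_mk hm1 h01]
  have e2 : Fre f (mk' ρ₂) ν' = (∫ x, ρ₂ x * g x) + (∫ x, ρ₂ x * Real.log (ρ₂ x)) - Hent ν' := by
    rw [Fre, integral_mk hm2 h02 g, Hent_mk hm2 h02]
  have hint1 : Integrable (fun x => ρ₁ x * g x) (volume : Measure (Torus n)) :=
    integrable_of_bounded ((hm1.mul hg.measurable).aestronglyMeasurable) (M := C₁ * B)
      fun x => by
        rw [abs_mul]
        exact mul_le_mul (by rw [abs_of_nonneg (h01 x)]; exact hhi1 x) (hgB x) (abs_nonneg _)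
          (le_of_lt hC0)
  have hint2 : Integrable (fun x => ρ₂ x * g x) (volume : Measure (Torus n)) :=
    integrable_of_bounded ((hm2.mul hg.measurable).aestronglyMeasurable) (M := C₁ * B)
      fun x => by
        rw [abs_mul]
        exact mul_le_mul (by rw [abs_of_nonneg (h02 x)]; exact hhi2 x) (hgB x) (abs_nonneg _)
          (le_of_lt hC0)
  have hlint1 : Integrable (fun x => ρ₁ x * Real.log (ρ₁ x)) (volume : Measure (Torus n)) :=
    integrable_of_bounded ((hm1.mul (Real.measurable_log.comp hm1)).aestronglyMeasurable)
      (M := C₁ * Real.log C₁) fun x => by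
        rw [abs_mul]
        exact mul_le_mul (by rw [abs_of_nonneg (h01 x)]; exact hhi1 x)
          (abs_log_le hC (hlo1 x) (hhi1 x)) (abs_nonneg _) (le_of_lt hC0)
  have hlint2 : Integrable (fun x => ρ₂ x * Real.log (ρ₂ x)) (volume : Measure (Torus n)) :=
    integrable_of_bounded ((hm2.mul (Real.measurable_log.comp hm2)).aestronglyMeasurable)
      (M := C₁ * Real.log C₁) fun x => by
        rw [abs_mul]
        exact mul_le_mul (by rw [abs_of_nonneg (h02 x)]; exact hhi2 x)
          (abs_log_le hC (hlo2 x) (hhi2 x)) (abs_nonneg _) (le_of_lt hC0)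
  have T1 : |(∫ x, ρ₁ x * g x) - ∫ x, ρ₂ x * g x| ≤ d * B := by
    rw [← integral_sub hint1 hint2]
    refine abs_integral_le fun x => ?_
    rw [show ρ₁ x * g x - ρ₂ x * g x = (ρ₁ x - ρ₂ x) * g x by ring, abs_mul]
    exact mul_le_mul (hd x) (hgB x) (abs_nonneg _) hd0
  have T2 : |(∫ x, ρ₁ x * Real.log (ρ₁ x)) - ∫ x, ρ₂ x * Real.log (ρ₂ x)|
      ≤ (1 + Real.log C₁) * d := by
    rw [← integral_sub hlint1 hlint2]
    refine abs_integral_le fun x => ?_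
    calc |ρ₁ x * Real.log (ρ₁ x) - ρ₂ x * Real.log (ρ₂ x)|
        ≤ (1 + Real.log C₁) * |ρ₁ x - ρ₂ x| :=
          mul_log_lip hC ⟨hlo1 x, hhi1 x⟩ ⟨hlo2 x, hhi2 x⟩
      _ ≤ (1 + Real.log C₁) * d := mul_le_mul_of_nonneg_left (hd x) hLnn
  calc |Fre f (mk' ρ₁) ν' - Fre f (mk' ρ₂) ν'|
      = |((∫ x, ρ₁ x * g x) - ∫ x, ρ₂ x * g x)
        + ((∫ x, ρ₁ x * Real.log (ρ₁ x)) - ∫ x, ρ₂ x * Real.log (ρ₂ x))| := by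
        rw [e1, e2]; ring_nf
    _ ≤ |(∫ x, ρ₁ x * g x) - ∫ x, ρ₂ x * g x|
        + |(∫ x, ρ₁ x * Real.log (ρ₁ x)) - ∫ x, ρ₂ x * Real.log (ρ₂ x)| := abs_add_le _ _
    _ ≤ d * B + (1 + Real.log C₁) * d := add_le_add T1 T2
    _ = (B + (1 + Real.log C₁)) * d := by ring

lemma Fre_inf_diff (hf : Continuous fun p : Torus n × Torus n => f p.1 p.2)
    (hB : ∀ x y, |f x y| ≤ B) (hC : 1 ≤ C₁) {η₁ η₂ : Torus n → ℝ}
    (hm1 : Measurable η₁) (hm2 : Measurable η₂)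
    (hlo1 : ∀ x, C₁⁻¹ ≤ η₁ x) (hhi1 : ∀ x, η₁ x ≤ C₁)
    (hlo2 : ∀ x, C₁⁻¹ ≤ η₂ x) (hhi2 : ∀ x, η₂ x ≤ C₁)
    (hp1 : IsProbabilityMeasure (mk' η₁)) (hp2 : IsProbabilityMeasure (mk' η₂))
    (μ' : Measure (Torus n)) [IsProbabilityMeasure μ'] :
    |Fre f μ' (mk' η₁) - Fre f μ' (mk' η₂)|
      ≤ (B + (1 + Real.log C₁)) * (⨆ x, |η₁ x - η₂ x|) := by
  have hC0 : (0:ℝ) < C₁ := lt_of_lt_of_le one_pos hC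
  have h01 : ∀ x, 0 ≤ η₁ x := fun x => le_trans (le_of_lt (inv_pos.mpr hC0)) (hlo1 x)
  have h02 : ∀ x, 0 ≤ η₂ x := fun x => le_trans (le_of_lt (inv_pos.mpr hC0)) (hlo2 x)
  have hBnn : 0 ≤ B := le_trans (abs_nonneg _)
    (hB (Classical.arbitrary _) (Classical.arbitrary _))
  have hLnn : 0 ≤ 1 + Real.log C₁ := by
    have := Real.log_nonneg hC; linarith
  set d := ⨆ x, |η₁ x - η₂ x| with hd_def
  have hbd : ∀ x, |η₁ x - η₂ x| ≤ C₁ + C₁ := fun x => by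
    calc |η₁ x - η₂ x| ≤ |η₁ x| + |η₂ x| := abs_sub _ _
      _ ≤ C₁ + C₁ := add_le_add (by rw [abs_of_nonneg (h01 x)]; exact hhi1 x)
          (by rw [abs_of_nonneg (h02 x)]; exact hhi2 x)
  have hd : ∀ x, |η₁ x - η₂ x| ≤ d := fun x => le_ciSup_of_bdd hbd x
  have hd0 : 0 ≤ d := le_trans (abs_nonneg _) (hd (Classical.arbitrary _))
  set g₁ := fun x => ∫ y, f x y ∂(mk' η₁) with hg1_def
  set g₂ := fun x => ∫ y, f x y ∂(mk' η₂) with hg2_def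
  have hg1 : Continuous g₁ := cont_inner hf hB _
  have hg2 : Continuous g₂ := cont_inner hf hB _
  have hg1B : ∀ x, |g₁ x| ≤ B := fun x => abs_inner_le hB _ x
  have hg2B : ∀ x, |g₂ x| ≤ B := fun x => abs_inner_le hB _ x
  -- pointwise bound on g₁ - g₂
  have hgdiff : ∀ x, |g₁ x - g₂ x| ≤ d * B := by
    intro x
    have hcx : Continuous fun y => f x y := hf.comp (Continuous.prodMk_right x)
    have e1 : g₁ x = ∫ y, η₁ y * f x y := integral_mk hm1 h01 _
    have e2 : g₂ x = ∫ y, η₂ y * f x y := integral_mk hm2 h02 _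
    have hi1 : Integrable (fun y => η₁ y * f x y) (volume : Measure (Torus n)) :=
      integrable_of_bounded ((hm1.mul hcx.measurable).aestronglyMeasurable) (M := C₁ * B)
        fun y => by
          rw [abs_mul]
          exact mul_le_mul (by rw [abs_of_nonneg (h01 y)]; exact hhi1 y) (hB x y) (abs_nonneg _)
            (le_of_lt hC0)
    have hi2 : Integrable (fun y => η₂ y * f x y) (volume : Measure (Torus n)) :=
      integrable_of_bounded ((hm2.mul hcx.measurable).aestronglyMeasurable) (M := C₁ * B)
        fun y => by
          rw [abs_mul]
          exact mul_le_mul (by rw [abs_of_nonneg (h02 y)]; exact hhi2 y) (hB x y) (abs_nonneg _)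
            (le_of_lt hC0)
    rw [e1, e2, ← integral_sub hi1 hi2]
    refine abs_integral_le fun y => ?_
    rw [show η₁ y * f x y - η₂ y * f x y = (η₁ y - η₂ y) * f x y by ring, abs_mul]
    exact mul_le_mul (hd y) (hB x y) (abs_nonneg _) hd0
  have hint1 : Integrable g₁ μ' := integrable_of_bounded hg1.aestronglyMeasurable hg1B
  have hint2 : Integrable g₂ μ' := integrable_of_bounded hg2.aestronglyMeasurable hg2B
  have T1 : |(∫ x, g₁ x ∂μ') - ∫ x, g₂ x ∂μ'| ≤ d * B := by
    rw [← integral_sub hint1 hint2]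
    exact abs_integral_le fun x => hgdiff x
  have T2 : |Hent (mk' η₁) - Hent (mk' η₂)| ≤ (1 + Real.log C₁) * d := by
    rw [Hent_mk hm1 h01, Hent_mk hm2 h02]
    have hlint1 : Integrable (fun x => η₁ x * Real.log (η₁ x)) (volume : Measure (Torus n)) :=
      integrable_of_bounded ((hm1.mul (Real.measurable_log.comp hm1)).aestronglyMeasurable)
        (M := C₁ * Real.log C₁) fun x => by
          rw [abs_mul]
          exact mul_le_mul (by rw [abs_of_nonneg (h01 x)]; exact hhi1 x)
            (abs_log_le hC (hlo1 x) (hhi1 x)) (abs_nonneg _) (le_of_lt hC0)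
    have hlint2 : Integrable (fun x => η₂ x * Real.log (η₂ x)) (volume : Measure (Torus n)) :=
      integrable_of_bounded ((hm2.mul (Real.measurable_log.comp hm2)).aestronglyMeasurable)
        (M := C₁ * Real.log C₁) fun x => by
          rw [abs_mul]
          exact mul_le_mul (by rw [abs_of_nonneg (h02 x)]; exact hhi2 x)
            (abs_log_le hC (hlo2 x) (hhi2 x)) (abs_nonneg _) (le_of_lt hC0)
    rw [← integral_sub hlint1 hlint2]
    refine abs_integral_le fun x => ?_
    calc |η₁ x * Real.log (η₁ x) - η₂ x * Real.log (η₂ x)|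
        ≤ (1 + Real.log C₁) * |η₁ x - η₂ x| :=
          mul_log_lip hC ⟨hlo1 x, hhi1 x⟩ ⟨hlo2 x, hhi2 x⟩
      _ ≤ (1 + Real.log C₁) * d := mul_le_mul_of_nonneg_left (hd x) hLnn
  calc |Fre f μ' (mk' η₁) - Fre f μ' (mk' η₂)|
      = |((∫ x, g₁ x ∂μ') - ∫ x, g₂ x ∂μ') - (Hent (mk' η₁) - Hent (mk' η₂))| := by
        rw [Fre, Fre]; simp only [hg1_def, hg2_def]; ring_nf
    _ ≤ |(∫ x, g₁ x ∂μ') - ∫ x, g₂ x ∂μ'| + |Hent (mk' η₁) - Hent (mk' η₂)| := abs_sub _ _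
    _ ≤ d * B + (1 + Real.log C₁) * d := add_le_add T1 T2
    _ = (B + (1 + Real.log C₁)) * d := by ring

end

/-- **Uniform-norm control of the Nikaido–Isoda error.** Given `C₁ ∈ [1,∞)` and a bound `B` on
`sup |f|`, there is a constant `C` (depending only on `C₁` and `B`) such that for all continuous
payoffs `f` bounded by `B` and all probability densities `ρ₁, ρ₂, η₁, η₂` pinched between
`C₁⁻¹` and `C₁`, the Nikaido–Isoda errors are finite and
`|NI(μ₁,ν₁) − NI(μ₂,ν₂)| ≤ C (sup|ρ₁−ρ₂| + sup|η₁−η₂|)`. -/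
theorem stmt3 (n : ℕ) (C₁ : ℝ) (hC₁ : 1 ≤ C₁) (B : ℝ) :
    ∃ C : ℝ, ∀ f : Torus n → Torus n → ℝ,
      (Continuous fun p : Torus n × Torus n => f p.1 p.2) →
      (∀ x y, |f x y| ≤ B) →
      ∀ ρ₁ ρ₂ η₁ η₂ : Torus n → ℝ,
      Measurable ρ₁ → Measurable ρ₂ → Measurable η₁ → Measurable η₂ →
      (∀ x, C₁⁻¹ ≤ ρ₁ x) → (∀ x, ρ₁ x ≤ C₁) →
      (∀ x, C₁⁻¹ ≤ ρ₂ x) → (∀ x, ρ₂ x ≤ C₁) →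
      (∀ x, C₁⁻¹ ≤ η₁ x) → (∀ x, η₁ x ≤ C₁) →
      (∀ x, C₁⁻¹ ≤ η₂ x) → (∀ x, η₂ x ≤ C₁) →
      IsProbabilityMeasure (volume.withDensity fun x => ENNReal.ofReal (ρ₁ x)) →
      IsProbabilityMeasure (volume.withDensity fun x => ENNReal.ofReal (ρ₂ x)) →
      IsProbabilityMeasure (volume.withDensity fun x => ENNReal.ofReal (η₁ x)) →
      IsProbabilityMeasure (volume.withDensity fun x => ENNReal.ofReal (η₂ x)) →
      ∃ r₁ r₂ : ℝ,
        NIval f (volume.withDensity fun x => ENNReal.ofReal (ρ₁ x))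
              (volume.withDensity fun x => ENNReal.ofReal (η₁ x)) = (r₁ : EReal) ∧
        NIval f (volume.withDensity fun x => ENNReal.ofReal (ρ₂ x))
              (volume.withDensity fun x => ENNReal.ofReal (η₂ x)) = (r₂ : EReal) ∧
        |r₁ - r₂| ≤ C * ((⨆ x, |ρ₁ x - ρ₂ x|) + (⨆ x, |η₁ x - η₂ x|)) := by
  refine ⟨B + (1 + Real.log C₁), ?_⟩
  intro f hf hB ρ₁ ρ₂ η₁ η₂ hmρ₁ hmρ₂ hmη₁ hmη₂ hloρ₁ hhiρ₁ hloρ₂ hhiρ₂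
    hloη₁ hhiη₁ hloη₂ hhiη₂ hpρ₁ hpρ₂ hpη₁ hpη₂
  have hpρ₁' : IsProbabilityMeasure (mk' ρ₁) := hpρ₁
  have hpρ₂' : IsProbabilityMeasure (mk' ρ₂) := hpρ₂
  have hpη₁' : IsProbabilityMeasure (mk' η₁) := hpη₁
  have hpη₂' : IsProbabilityMeasure (mk' η₂) := hpη₂
  have hadmρ₁ : entAdmissible (mk' ρ₁) := entAdmissible_mk hC₁ hmρ₁ hloρ₁ hhiρ₁
  have hadmρ₂ : entAdmissible (mk' ρ₂) := entAdmissible_mk hC₁ hmρ₂ hloρ₂ hhiρ₂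
  have hadmη₁ : entAdmissible (mk' η₁) := entAdmissible_mk hC₁ hmη₁ hloη₁ hhiη₁
  have hadmη₂ : entAdmissible (mk' η₂) := entAdmissible_mk hC₁ hmη₂ hloη₂ hhiη₂
  obtain ⟨s₁, hs₁⟩ := sup_finite (f := f) hB hC₁ hmρ₁ hloρ₁ hhiρ₁ hpρ₁'
  obtain ⟨s₂, hs₂⟩ := sup_finite (f := f) hB hC₁ hmρ₂ hloρ₂ hhiρ₂ hpρ₂'
  obtain ⟨i₁, hi₁⟩ := inf_finite (f := f) hB hC₁ hmη₁ hloη₁ hhiη₁ hpη₁'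
  obtain ⟨i₂, hi₂⟩ := inf_finite (f := f) hB hC₁ hmη₂ hloη₂ hhiη₂ hpη₂'
  have habs_s : |s₁ - s₂| ≤ (B + (1 + Real.log C₁)) * (⨆ x, |ρ₁ x - ρ₂ x|) := by
    refine abs_sub_le_iff.mpr ⟨?_, ?_⟩
    · have h' : s₁ ≤ s₂ + (B + (1 + Real.log C₁)) * (⨆ x, |ρ₁ x - ρ₂ x|) := by
        refine sup_le_aux hadmρ₁ hadmρ₂ (fun ν' hp ha => ?_) hs₁ hs₂
        haveI := hp
        have h := Fre_sup_diff (f := f) hf hB hC₁ hmρ₁ hmρ₂ hloρ₁ hhiρ₁ hloρ₂ hhiρ₂ ν'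
        linarith [(abs_sub_le_iff.mp h).1]
      linarith
    · have h' : s₂ ≤ s₁ + (B + (1 + Real.log C₁)) * (⨆ x, |ρ₁ x - ρ₂ x|) := by
        refine sup_le_aux hadmρ₂ hadmρ₁ (fun ν' hp ha => ?_) hs₂ hs₁
        haveI := hp
        have h := Fre_sup_diff (f := f) hf hB hC₁ hmρ₁ hmρ₂ hloρ₁ hhiρ₁ hloρ₂ hhiρ₂ ν'
        linarith [(abs_sub_le_iff.mp h).2]
      linarith
  have habs_i : |i₁ - i₂| ≤ (B + (1 + Real.log C₁)) * (⨆ x, |η₁ x - η₂ x|) := by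
    refine abs_sub_le_iff.mpr ⟨?_, ?_⟩
    · have h' : i₁ ≤ i₂ + (B + (1 + Real.log C₁)) * (⨆ x, |η₁ x - η₂ x|) := by
        refine inf_le_aux hadmη₁ hadmη₂ (fun μ' hp ha => ?_) hi₁ hi₂
        haveI := hp
        have h := Fre_inf_diff (f := f) hf hB hC₁ hmη₁ hmη₂ hloη₁ hhiη₁ hloη₂ hhiη₂ hpη₁' hpη₂' μ'
        linarith [(abs_sub_le_iff.mp h).1]
      linarith
    · have h' : i₂ ≤ i₁ + (B + (1 + Real.log C₁)) * (⨆ x, |η₁ x - η₂ x|) := by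
        refine inf_le_aux hadmη₂ hadmη₁ (fun μ' hp ha => ?_) hi₂ hi₁
        haveI := hp
        have h := Fre_inf_diff (f := f) hf hB hC₁ hmη₁ hmη₂ hloη₁ hhiη₁ hloη₂ hhiη₂ hpη₁' hpη₂' μ'
        linarith [(abs_sub_le_iff.mp h).2]
      linarith
  refine ⟨s₁ - i₁, s₂ - i₂, ?_, ?_, ?_⟩
  · show NIval f (mk' ρ₁) (mk' η₁) = _
    rw [NIval, hs₁, hi₁]
    exact (EReal.coe_sub _ _).symm
  · show NIval f (mk' ρ₂) (mk' η₂) = _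
    rw [NIval, hs₂, hi₂]
    exact (EReal.coe_sub _ _).symm
  · calc |s₁ - i₁ - (s₂ - i₂)| = |(s₁ - s₂) + (i₂ - i₁)| := by ring_nf
      _ ≤ |s₁ - s₂| + |i₂ - i₁| := abs_add_le _ _
      _ = |s₁ - s₂| + |i₁ - i₂| := by rw [abs_sub_comm i₂ i₁]
      _ ≤ (B + (1 + Real.log C₁)) * (⨆ x, |ρ₁ x - ρ₂ x|)
          + (B + (1 + Real.log C₁)) * (⨆ x, |η₁ x - η₂ x|) := add_le_add habs_s habs_i
      _ = (B + (1 + Real.log C₁)) * ((⨆ x, |ρ₁ x - ρ₂ x|) + (⨆ x, |η₁ x - η₂ x|)) := by ring
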